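/- Let V be a real Hilbert space, X ⊆ V a convex set, A : V → V strongly monotone with constant m > 0, φ : V → ℝ any functional, and ℓ ∈ V. If u₁, u₂ ∈ X both satisfy the variational inequality ⟪A(u), v − u⟫ + φ(v) − φ(u) ≥ ⟪ℓ, v − u⟫ for all v ∈ X, then u₁ = u₂. -/
import Mathlib


open scoped RealInnerProductSpace

/-- Uniqueness of solutions to the variational inequality with a strongly
monotone operator. -/
theorem VI_uniqueness
    {V : Type*} [NormedAddCommGroup V] [InnerProductSpace ℝ V] [CompleteSpace V]
    (X : Set V) (hXconv : Convex ℝ X)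
    (A : V → V) (m : ℝ) (hm : 0 < m)
    (hmono : ∀ w₁ w₂ : V, m * ‖w₁ - w₂‖ ^ 2 ≤ ⟪A w₁ - A w₂, w₁ - w₂⟫)
    (φ : V → ℝ) (ℓ : V)
    (u₁ u₂ : V) (hu₁ : u₁ ∈ X) (hu₂ : u₂ ∈ X)
    (hVI₁ : ∀ v ∈ X, ⟪ℓ, v - u₁⟫ ≤ ⟪A u₁, v - u₁⟫ + φ v - φ u₁)
    (hVI₂ : ∀ v ∈ X, ⟪ℓ, v - u₂⟫ ≤ ⟪A u₂, v - u₂⟫ + φ v - φ u₂) :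
    u₁ = u₂ := by
  have h1 := hVI₁ u₂ hu₂
  have h2 := hVI₂ u₁ hu₁
  have key : ⟪A u₁ - A u₂, u₁ - u₂⟫ ≤ 0 := by
    have e1 : ⟪A u₁ - A u₂, u₁ - u₂⟫
        = -((⟪A u₁, u₂ - u₁⟫) + (⟪A u₂, u₁ - u₂⟫)) := by
      simp [inner_sub_left, inner_sub_right]; ring
    have e2 : (0:ℝ) = ⟪ℓ, u₂ - u₁⟫ + ⟪ℓ, u₁ - u₂⟫ := by
      simp [inner_sub_right]
    rw [e1]
    nlinarith [h1, h2]
  have hnorm : m * ‖u₁ - u₂‖ ^ 2 ≤ 0 := le_trans (hmono u₁ u₂) key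
  have : ‖u₁ - u₂‖ ^ 2 ≤ 0 := nonpos_of_mul_nonpos_right (by linarith) hm
  have : ‖u₁ - u₂‖ = 0 := by nlinarith [norm_nonneg (u₁ - u₂)]
  have := norm_eq_zero.mp this
  exact sub_eq_zero.mp this
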